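/- Let F̃_{m,a}(n;x) = ∑_{k=0}^{n} C(n,k) * m^k * w_k(x/m) * (-a)^{n-k} with m ≠ 0. Then for all natural n and real m ≠ 0, a, x: F̃_{m,a}(n; x-m) = (-1)^n * F̃_{m,-a-m}(n; -x). -/

import Mathlib

open Finset

def stirling2 : ℕ → ℕ → ℕ
  | 0, 0 => 1
  | 0, _ + 1 => 0
  | _ + 1, 0 => 0
  | n + 1, k + 1 => (k + 1) * stirling2 n (k + 1) + stirling2 n k

noncomputable def w (n : ℕ) (x : ℝ) : ℝ :=
  ∑ k ∈ range (n + 1), (k.factorial : ℝ) * (stirling2 n k : ℝ) * x ^ k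

noncomputable def Ft (m a : ℝ) (n : ℕ) (x : ℝ) : ℝ :=
  ∑ k ∈ range (n + 1), (n.choose k : ℝ) * m ^ k * w k (x / m) * (-a) ^ (n - k)

open Polynomial in
noncomputable def Wp (n : ℕ) : ℝ[X] :=
  ∑ j ∈ range (n + 1), C ((j.factorial : ℝ) * stirling2 n j) * X ^ j

lemma stirling2_eq_zero : ∀ {n k : ℕ}, n < k → stirling2 n k = 0
  | 0, _ + 1, _ => rfl
  | _ + 1, _ + 1, h => by
      rw [stirling2, stirling2_eq_zero (by omega), stirling2_eq_zero (by omega)]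
      simp

open Polynomial in
lemma Wp_coeff (n j : ℕ) : (Wp n).coeff j = (j.factorial : ℝ) * stirling2 n j := by
  rw [Wp, finset_sum_coeff]
  simp only [coeff_C_mul, coeff_X_pow, mul_ite, mul_one, mul_zero]
  rw [Finset.sum_ite_eq]
  by_cases hj : j ∈ range (n + 1)
  · rw [if_pos hj]
  · rw [if_neg hj, stirling2_eq_zero (by simp at hj; omega)]
    simp

open Polynomial in
lemma w_eq (n : ℕ) (y : ℝ) : w n y = (Wp n).eval y := by
  rw [w, Wp, eval_finset_sum]
  simp

open Polynomial in
lemma Wp_succ (n : ℕ) : Wp (n + 1) = X * derivative ((1 + X) * Wp n) := by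
  ext j
  cases j with
  | zero =>
      simp [Wp_coeff, mul_coeff_zero, stirling2]
  | succ j =>
      rw [Wp_coeff, coeff_X_mul, coeff_derivative, add_mul, one_mul, coeff_add,
        coeff_X_mul, Wp_coeff, Wp_coeff,
        show stirling2 (n + 1) (j + 1) = (j + 1) * stirling2 n (j + 1) + stirling2 n j from rfl]
      push_cast [Nat.factorial_succ]
      ring

open Polynomial in
lemma comp_neg_succ (k : ℕ) :
    (Wp (k + 1)).comp (-X) = X * derivative ((1 - X) * (Wp k).comp (-X)) := by
  have hd : ∀ p : ℝ[X], (derivative p).comp (-X) = -derivative (p.comp (-X)) := by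
    intro p
    rw [derivative_comp]
    simp
  rw [Wp_succ, mul_comp, X_comp, hd, mul_comp, add_comp, one_comp, X_comp]
  ring_nf

open Polynomial in
lemma key_poly (n : ℕ) :
    (Wp n).comp (X - 1)
      = (-1) ^ n * ∑ k ∈ range (n + 1), C ((n.choose k : ℝ)) * (Wp k).comp (-X) := by
  induction n with
  | zero =>
      simp [Wp, stirling2]
  | succ n ih =>
      set R : ℝ[X] := ∑ k ∈ range (n + 1), C ((n.choose k : ℝ)) * (Wp k).comp (-X) with hR
      have hder : X * derivative ((1 - X) * R)
          = ∑ k ∈ range (n + 1), C ((n.choose k : ℝ)) * (Wp (k + 1)).comp (-X) := by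
        rw [hR, Finset.mul_sum, derivative_sum, Finset.mul_sum]
        refine Finset.sum_congr rfl fun k _ => ?_
        rw [comp_neg_succ, mul_left_comm (1 - X), derivative_C_mul, mul_left_comm X]
      have hpascal : ∑ k ∈ range (n + 2), C (((n + 1).choose k : ℝ)) * (Wp k).comp (-X)
          = R + ∑ k ∈ range (n + 1), C ((n.choose k : ℝ)) * (Wp (k + 1)).comp (-X) := by
        rw [Finset.sum_range_succ' _ (n + 1)]
        have hterm : ∀ k ∈ range (n + 1),
            C ((((n + 1).choose (k + 1) : ℕ) : ℝ)) * (Wp (k + 1)).comp (-X)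
              = C (((n.choose (k + 1) : ℕ) : ℝ)) * (Wp (k + 1)).comp (-X)
                + C (((n.choose k : ℕ) : ℝ)) * (Wp (k + 1)).comp (-X) := by
          intro k _
          rw [Nat.choose_succ_succ]
          push_cast
          rw [map_add, add_mul]
          ring
        rw [Finset.sum_congr rfl hterm, Finset.sum_add_distrib,
          show ((n + 1).choose 0 : ℝ) = ((n.choose 0 : ℕ) : ℝ) by simp, hR,
          Finset.sum_range_succ' (fun k => C ((n.choose k : ℝ)) * (Wp k).comp (-X)) n,
          Finset.sum_range_succ
            (fun k => C (((n.choose (k + 1) : ℕ) : ℝ)) * (Wp (k + 1)).comp (-X)) n,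
          Nat.choose_succ_self]
        push_cast
        simp only [map_zero, zero_mul, add_zero]
        ring
      have hc : derivative (X * ((-1) ^ n * R)) = (-1) ^ n * derivative (X * R) := by
        rw [mul_left_comm, show ((-1 : ℝ[X]) ^ n) = C ((-1 : ℝ) ^ n) by simp, derivative_C_mul]
      have hd : (derivative ((1 + X) * Wp n)).comp (X - 1)
          = derivative (((1 + X) * Wp n).comp (X - 1)) := by
        rw [derivative_comp]; simp
      rw [Wp_succ, mul_comp, X_comp, hd, mul_comp, add_comp, one_comp, X_comp, ih,
        show (1 : ℝ[X]) + (X - 1) = X by ring, hc, hpascal, ← hder]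
      rw [derivative_mul, derivative_mul]
      simp only [derivative_one, derivative_X, derivative_sub]
      ring

lemma key (k : ℕ) (y : ℝ) :
    w k (y - 1) = (-1) ^ k * ∑ j ∈ range (k + 1), (k.choose j : ℝ) * w j (-y) := by
  have := congrArg (Polynomial.eval y) (key_poly k)
  simp only [Polynomial.eval_comp, Polynomial.eval_sub, Polynomial.eval_one, Polynomial.eval_X,
    Polynomial.eval_mul, Polynomial.eval_pow, Polynomial.eval_neg, Polynomial.eval_finset_sum,
    Polynomial.eval_C] at this
  rw [w_eq, this]
  congr 1
  refine Finset.sum_congr rfl fun j _ => ?_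
  rw [w_eq]

theorem stmt12 (n : ℕ) (m a x : ℝ) (hm : m ≠ 0) :
    Ft m a n (x - m) = (-1) ^ n * Ft m (-a - m) n (-x) := by
  have hdiv : (x - m) / m = x / m - 1 := by field_simp
  have step1 : Ft m a n (x - m)
      = ∑ j ∈ range (n + 1), (∑ k ∈ range (n + 1),
          (n.choose k : ℝ) * (k.choose j : ℝ) * (-m) ^ k * (-a) ^ (n - k)) * w j (-(x / m)) := by
    rw [Ft]
    have h1 : ∀ k ∈ range (n + 1),
        (n.choose k : ℝ) * m ^ k * w k ((x - m) / m) * (-a) ^ (n - k)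
          = ∑ j ∈ range (n + 1),
              (n.choose k : ℝ) * (k.choose j : ℝ) * (-m) ^ k * (-a) ^ (n - k) * w j (-(x / m)) := by
      intro k hk
      rw [hdiv, key]
      rw [Finset.mul_sum, Finset.mul_sum, Finset.sum_mul]
      have hsub : ∀ j ∈ range (n + 1), j ∉ range (k + 1) →
          (n.choose k : ℝ) * (k.choose j : ℝ) * (-m) ^ k * (-a) ^ (n - k) * w j (-(x / m)) = 0 := by
        intro j _ hj
        rw [Nat.choose_eq_zero_of_lt (show k < j by simp at hj; omega)]
        simp
      rw [← Finset.sum_subset (Finset.range_subset_range.2 (by simp at hk; omega)) hsub]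
      refine Finset.sum_congr rfl fun j _ => ?_
      ring
    rw [Finset.sum_congr rfl h1, Finset.sum_comm]
    refine Finset.sum_congr rfl fun j _ => ?_
    rw [Finset.sum_mul]
  have inner : ∀ j ∈ range (n + 1),
      (∑ k ∈ range (n + 1), (n.choose k : ℝ) * (k.choose j : ℝ) * (-m) ^ k * (-a) ^ (n - k))
        = (n.choose j : ℝ) * (-m) ^ j * (-m + -a) ^ (n - j) := by
    intro j hj
    have hjn : j ≤ n := by simp at hj; omega
    have hz : ∑ k ∈ Finset.Ico 0 j,
        (n.choose k : ℝ) * (k.choose j : ℝ) * (-m) ^ k * (-a) ^ (n - k) = 0 := by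
      refine Finset.sum_eq_zero fun k hk => ?_
      simp only [Finset.mem_Ico] at hk
      rw [Nat.choose_eq_zero_of_lt (show k < j by omega)]
      simp
    rw [Finset.range_eq_Ico,
      ← Finset.sum_Ico_consecutive _ (Nat.zero_le j) (show j ≤ n + 1 by omega), hz, zero_add,
      Finset.sum_Ico_eq_sum_range]
    have hrw : ∀ t ∈ range (n + 1 - j),
        (n.choose (j + t) : ℝ) * ((j + t).choose j : ℝ) * (-m) ^ (j + t) * (-a) ^ (n - (j + t))
          = (n.choose j : ℝ) * (-m) ^ j
              * ((-m) ^ t * (-a) ^ (n - j - t) * ((n - j).choose t : ℝ)) := by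
      intro t ht
      simp only [Finset.mem_range] at ht
      have hmc : (n.choose (j + t)) * ((j + t).choose j) = n.choose j * (n - j).choose t := by
        rw [Nat.choose_mul (show j ≤ j + t by omega),
          Nat.add_sub_cancel_left]
      have h2 : (n.choose (j + t) : ℝ) * ((j + t).choose j : ℝ)
          = (n.choose j : ℝ) * ((n - j).choose t : ℝ) := by
        exact_mod_cast hmc
      rw [pow_add, show n - (j + t) = n - j - t from by omega]
      calc (n.choose (j + t) : ℝ) * ((j + t).choose j : ℝ) * ((-m) ^ j * (-m) ^ t)
            * (-a) ^ (n - j - t)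
          = (n.choose (j + t) : ℝ) * ((j + t).choose j : ℝ) * (-m) ^ j * (-m) ^ t
            * (-a) ^ (n - j - t) := by ring
        _ = _ := by rw [h2]; ring
    rw [Finset.sum_congr rfl hrw, ← Finset.mul_sum,
      show n + 1 - j = n - j + 1 from by omega, ← add_pow (-m) (-a) (n - j)]
  rw [step1, Finset.sum_congr rfl (fun j hj => by rw [inner j hj])]
  rw [Ft, Finset.mul_sum]
  refine Finset.sum_congr rfl fun j hj => ?_
  have hjn : j ≤ n := by simp at hj; omega
  have e3 : ((-1 : ℝ)) ^ j * (-1) ^ (n - j) = (-1) ^ n := by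
    rw [← pow_add]
    congr 1
    omega
  rw [show (-x / m : ℝ) = -(x / m) from by ring]
  have e1 : ((-m : ℝ)) ^ j = (-1) ^ j * m ^ j := by rw [neg_pow]
  have e2 : ((-m + -a : ℝ)) ^ (n - j) = (-1) ^ (n - j) * (-(-a - m)) ^ (n - j) := by
    rw [show (-m + -a : ℝ) = -(-(-a - m)) from by ring, neg_pow]
  rw [e1, e2]
  linear_combination ((n.choose j : ℝ) * m ^ j * (-(-a - m)) ^ (n - j) * w j (-(x / m))) * e3
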